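/- Let p be an odd prime and a an integer with 1 ≤ a ≤ (p-1)/2. Then (2a-2p)_p * ((2a)_p)^{2r} / ((1)_p)^{2r+1} ≡ -1 (mod p) for any integer r ≥ 0, where the left side is a p-adic integer (after cancellation). -/

import Mathlib

/-- For `m < p` prime, `(p + m).choose p ≡ 1 [MOD p]` (a consequence of Lucas' theorem). -/
lemma choose_p_add_mod {p : ℕ} [Fact p.Prime] {m : ℕ} (hm : m < p) :
    (p + m).choose p ≡ 1 [MOD p] := by
  have h := Choose.choose_modEq_choose_mod_mul_choose_div_nat (n := p + m) (k := p) (p := p)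
  have hp : 0 < p := (Fact.out : p.Prime).pos
  have h1 : (p + m) % p = m := by
    rw [Nat.add_mod_left, Nat.mod_eq_of_lt hm]
  have h2 : (p + m) / p = 1 := by
    rw [Nat.add_div_left _ hp, Nat.div_eq_of_lt hm]
  simpa [h1, h2, Nat.mod_self, Nat.div_self hp] using h

theorem pochhammer_p_ratio_congr (p : ℕ) [Fact p.Prime] (hp : Odd p)
    (a : ℕ) (ha1 : 1 ≤ a) (ha2 : 2 * a ≤ p - 1) (r : ℕ) :
    ‖(((ascPochhammer ℚ p).eval (2 * a - 2 * p : ℚ)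
          * ((ascPochhammer ℚ p).eval (2 * a : ℚ)) ^ (2 * r)
          / (p.factorial : ℚ) ^ (2 * r + 1) + 1 : ℚ) : ℚ_[p])‖ ≤ (p : ℝ)⁻¹ := by
  have hpprime : p.Prime := Fact.out
  have hp3 : 3 ≤ p := by
    rcases hpprime.eq_two_or_odd' with h | _
    · exact absurd (h ▸ hp) (by decide)
    · omega
  -- abbreviations
  set b : ℕ := 2 * a - 1 with hb
  set m : ℕ := p - 2 * a with hm
  have hb1 : 2 * a = b + 1 := by omega
  have hbp : b < p := by omega
  have hmp : m < p := by omega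
  have h2p : 2 * p - 2 * a = p + m := by omega
  set A : ℕ := (p + m).choose p with hA
  set B : ℕ := (p + b).choose p with hB
  -- evaluate the ascPochhammer at 2a
  have heval1 : (ascPochhammer ℚ p).eval (2 * a : ℚ) = (p.factorial : ℚ) * B := by
    have : ((2 * a : ℕ) : ℚ) = (2 * a : ℚ) := by push_cast; ring
    rw [← this, ← ascPochhammer_eval_cast, ascPochhammer_nat_eq_ascFactorial, hb1,
      Nat.ascFactorial_eq_factorial_mul_choose]
    push_cast [Nat.add_comm b p]
    ring
  -- evaluate the ascPochhammer at 2a - 2p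
  have heval2 : (ascPochhammer ℚ p).eval (2 * a - 2 * p : ℚ) = -((p.factorial : ℚ) * A) := by
    have hcast : (2 * a - 2 * p : ℚ) = -(((2 * p - 2 * a : ℕ) : ℚ)) := by
      have : (2 * a : ℕ) ≤ 2 * p := by omega
      push_cast [Nat.cast_sub this]
      ring
    rw [hcast, ascPochhammer_eval_neg_eq_descPochhammer,
      descPochhammer_eval_eq_descFactorial, h2p, Nat.descFactorial_eq_factorial_mul_choose,
      Odd.neg_one_pow hp]
    push_cast
    ring
  -- the rational expression equals an integer
  have hfac : (p.factorial : ℚ) ≠ 0 := by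
    exact_mod_cast p.factorial_ne_zero
  have hkey : ((ascPochhammer ℚ p).eval (2 * a - 2 * p : ℚ)
          * ((ascPochhammer ℚ p).eval (2 * a : ℚ)) ^ (2 * r)
          / (p.factorial : ℚ) ^ (2 * r + 1) + 1 : ℚ)
      = (((1 : ℤ) - (A : ℤ) * (B : ℤ) ^ (2 * r) : ℤ) : ℚ) := by
    rw [heval1, heval2]
    field_simp
    push_cast
    ring
  rw [hkey]
  -- reduce to an integer divisibility
  have hdvd : (p : ℤ) ∣ ((1 : ℤ) - (A : ℤ) * (B : ℤ) ^ (2 * r)) := by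
    have hAB : A * B ^ (2 * r) ≡ 1 [MOD p] := by
      simpa using Nat.ModEq.mul (choose_p_add_mod hmp) ((choose_p_add_mod hbp).pow (2 * r))
    have h2 := (Nat.modEq_iff_dvd (n := p)).mp hAB.symm
    push_cast at h2
    simpa [neg_sub] using dvd_neg.mpr h2
  have hnorm := (Padic.norm_int_le_pow_iff_dvd
      (p := p) ((1 : ℤ) - (A : ℤ) * (B : ℤ) ^ (2 * r)) 1).mpr (by simpa using hdvd)
  have hcast : (((1 - (A : ℤ) * (B : ℤ) ^ (2 * r) : ℤ) : ℚ) : ℚ_[p])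
      = ((1 - (A : ℤ) * (B : ℤ) ^ (2 * r) : ℤ) : ℚ_[p]) := by push_cast; ring
  rw [hcast]
  simpa using hnorm
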